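/- Let n ≥ 2 and v, ξ' ∈ ℝ^{n−1} with ‖ξ'‖ < 1. Write g := ⟨v,ξ'⟩, m := ‖v‖², s := ‖ξ'‖², define r₀ := ((1+ig)² − (1−s)(1+m))^{1/2} using the principal branch of the complex square root, and set a₊ := (i − g + i·r₀)/(1+m) and a₋ := (i − g − i·r₀)/(1+m). Then Re r₀ < 1, and consequently both Im a₊ = (1 + Re r₀)/(1+m) > 0 and Im a₋ = (1 − Re r₀)/(1+m) > 0. -/

import Mathlib

open Complex

/-- The principal branch square root has nonnegative real part. -/
lemma re_cpow_half_nonneg (z : ℂ) : 0 ≤ (z ^ ((1 : ℂ) / 2)).re := by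
  rcases eq_or_ne z 0 with rfl | hz
  · simp [Complex.zero_cpow (by norm_num : (1 : ℂ) / 2 ≠ 0)]
  · rw [Complex.cpow_def_of_ne_zero hz, Complex.exp_re]
    have him : (Complex.log z * ((1 : ℂ) / 2)).im = z.arg / 2 := by
      simp [Complex.log_im, Complex.mul_im]
      ring
    rw [him]
    have h1 : -(Real.pi / 2) ≤ z.arg / 2 := by
      have := Complex.neg_pi_lt_arg z; linarith
    have h2 : z.arg / 2 ≤ Real.pi / 2 := by
      have := Complex.arg_le_pi z; linarith
    exact mul_nonneg (Real.exp_nonneg _)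
      (Real.cos_nonneg_of_mem_Icc ⟨h1, h2⟩)

/-- The principal-branch square root `r₀` of the discriminant of the symbol of the
boundary-flattened conjugated Laplacian (at `h = 0`), with `g = ⟨v,ξ'⟩`,
`m = ‖v‖²`, `s = ‖ξ'‖²`. -/
noncomputable def r0 (g m s : ℝ) : ℂ :=
  ((1 + Complex.I * (g : ℂ)) ^ 2 - (1 - (s : ℂ)) * (1 + (m : ℂ))) ^ ((1 : ℂ) / 2)

/-- The root `a₊ = (i − g + i·r₀)/(1+m)`. -/
noncomputable def aPlus (g m s : ℝ) : ℂ :=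
  (Complex.I - (g : ℂ) + Complex.I * r0 g m s) / (1 + (m : ℂ))

/-- The root `a₋ = (i − g − i·r₀)/(1+m)`. -/
noncomputable def aMinus (g m s : ℝ) : ℂ :=
  (Complex.I - (g : ℂ) - Complex.I * r0 g m s) / (1 + (m : ℂ))

/-- For `‖ξ'‖ < 1` (with `g = ⟪v,ξ'⟫`, `m = ‖v‖²`, `s = ‖ξ'‖²`): `Re r₀ < 1`,
and consequently `Im a₊ = (1 + Re r₀)/(1+m) > 0` and
`Im a₋ = (1 − Re r₀)/(1+m) > 0`. -/
theorem roots_in_upper_half_plane (n : ℕ) (hn : 2 ≤ n)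
    (v ξ' : EuclideanSpace ℝ (Fin (n - 1))) (hξ' : ‖ξ'‖ < 1)
    (g m s : ℝ) (hg : g = inner ℝ v ξ') (hm : m = ‖v‖ ^ 2) (hs : s = ‖ξ'‖ ^ 2) :
    (r0 g m s).re < 1 ∧
      (aPlus g m s).im = (1 + (r0 g m s).re) / (1 + m) ∧ 0 < (aPlus g m s).im ∧
      (aMinus g m s).im = (1 - (r0 g m s).re) / (1 + m) ∧ 0 < (aMinus g m s).im := by
  set z : ℂ := (1 + Complex.I * (g : ℂ)) ^ 2 - (1 - (s : ℂ)) * (1 + (m : ℂ)) with hz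
  set w : ℂ := r0 g m s with hw
  have hm0 : 0 ≤ m := hm ▸ sq_nonneg _
  have hs1 : s < 1 := by
    rw [hs]
    nlinarith [norm_nonneg ξ']
  have hP : 0 < (1 - s) * (1 + m) := mul_pos (by linarith) (by linarith)
  -- z coordinates
  have hzc : z = Complex.mk (1 - g ^ 2 - (1 - s) * (1 + m)) (2 * g) := by
    rw [hz]
    apply Complex.ext <;>
      simp [pow_two, Complex.mul_re, Complex.mul_im] <;> ring
  have hzre : z.re = 1 - g ^ 2 - (1 - s) * (1 + m) := by rw [hzc]
  have hzim : z.im = 2 * g := by rw [hzc]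
  -- w^2 = z
  have hw2 : w ^ 2 = z := by
    have : w = z ^ ((2 : ℂ)⁻¹) := by
      rw [hw, hz]; norm_num [r0]
    rw [this]
    exact_mod_cast Complex.cpow_nat_inv_pow z (two_ne_zero)
  have hwre0 : 0 ≤ w.re := re_cpow_half_nonneg z
  -- |z| < 2 - z.re
  have habs : ‖z‖ < 2 - z.re := by
    have h2 : 0 < 2 - z.re := by rw [hzre]; nlinarith
    have hsq : (‖z‖) ^ 2 < (2 - z.re) ^ 2 := by
      rw [Complex.sq_norm, Complex.normSq_apply]
      rw [hzre, hzim]; nlinarith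
    nlinarith [norm_nonneg z]
  -- w.re^2 = (|z| + z.re)/2
  have hren : w.re ^ 2 - w.im ^ 2 = z.re := by
    have := congrArg Complex.re hw2
    simpa [pow_two, Complex.mul_re] using this
  have habsw : w.re ^ 2 + w.im ^ 2 = ‖z‖ := by
    have h1 : ‖w ^ 2‖ = ‖z‖ := by rw [hw2]
    rw [norm_pow] at h1
    rw [← h1, Complex.sq_norm, Complex.normSq_apply]; ring
  have hwre2 : w.re ^ 2 < 1 := by nlinarith
  have hwre1 : w.re < 1 := by nlinarith
  have hmm : (1 + (m : ℂ)) = ((1 + m : ℝ) : ℂ) := by push_cast; ring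
  have hip : (aPlus g m s).im = (1 + w.re) / (1 + m) := by
    rw [aPlus, hmm, Complex.div_ofReal_im, ← hw]
    simp [Complex.add_im, Complex.sub_im, Complex.mul_im]
  have him' : (aMinus g m s).im = (1 - w.re) / (1 + m) := by
    rw [aMinus, hmm, Complex.div_ofReal_im, ← hw]
    simp [Complex.add_im, Complex.sub_im, Complex.mul_im]
  refine ⟨hwre1, hip, ?_, him', ?_⟩
  · rw [hip]
    have : 0 < 1 + w.re := by linarith
    positivity
  · rw [him']
    have : 0 < 1 - w.re := by linarith
    positivity
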